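/- If A is a Hurwitz (stable) real n×n matrix, then for any n×m matrix B the Lyapunov equation A W + W Aᵀ + B Bᵀ = 0 has a unique solution W, and this solution is symmetric positive semidefinite, given by W = ∫₀^∞ e^{Aτ} B Bᵀ e^{Aᵀτ} dτ. -/

import Mathlib

open Matrix NormedSpace Polynomial Filter Topology

variable {n : ℕ}

section Linfty
attribute [local instance] Matrix.linftyOpNormedRing Matrix.linftyOpNormedAlgebra

/-- mulVec by fixed vector, as a CLM on matrices. -/
noncomputable def mulVecCLM (v : Fin n → ℂ) : Matrix (Fin n) (Fin n) ℂ →L[ℝ] (Fin n → ℂ) :=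
  LinearMap.toContinuousLinearMap
    { toFun := fun M => M *ᵥ v
      map_add' := fun M N => Matrix.add_mulVec M N v
      map_smul' := fun c M => by
        ext i; simp [Matrix.mulVec, dotProduct, Finset.mul_sum, mul_assoc] }

theorem pow_mulVec_eigen (M : Matrix (Fin n) (Fin n) ℂ) (μ : ℂ) (v : Fin n → ℂ)
    (hv : M *ᵥ v = μ • v) (k : ℕ) : (M ^ k) *ᵥ v = (μ ^ k) • v := by
  induction k with
  | zero => simp
  | succ k ih =>
      rw [pow_succ', ← Matrix.mulVec_mulVec, ih, Matrix.mulVec_smul, hv, smul_smul, ← pow_succ]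

theorem exp_mulVec_eigen (M : Matrix (Fin n) (Fin n) ℂ) (μ : ℂ) (v : Fin n → ℂ)
    (hv : M *ᵥ v = μ • v) : exp M *ᵥ v = Complex.exp μ • v := by
  have h1 : exp M *ᵥ v = mulVecCLM v (exp M) := rfl
  rw [h1, exp_eq_tsum ℂ]; beta_reduce; erw [(mulVecCLM v).map_tsum (expSeries_summable' (𝕂 := ℂ) M)]
  have h2 : ∀ k : ℕ, mulVecCLM v ((k.factorial⁻¹ : ℂ) • M ^ k)
      = ((k.factorial⁻¹ : ℂ) * μ ^ k) • v := by
    intro k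
    show ((k.factorial⁻¹ : ℂ) • M ^ k) *ᵥ v = _
    rw [Matrix.smul_mulVec, pow_mulVec_eigen M μ v hv, smul_smul]
  simp_rw [h2]
  rw [Summable.tsum_smul_const (f := fun k : ℕ => (k.factorial⁻¹ : ℂ) * μ ^ k), Complex.exp_eq_exp_ℂ,
    exp_eq_tsum ℂ]
  · simp_rw [smul_eq_mul]
  · simpa [smul_eq_mul] using (expSeries_summable' (𝕂 := ℂ) μ)

theorem exp_eq_aeval (M : Matrix (Fin n) (Fin n) ℂ) :
    ∃ p : ℂ[X], exp M = aeval M p := by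
  have hmem : exp M ∈ Algebra.adjoin ℂ ({M} : Set (Matrix (Fin n) (Fin n) ℂ)) := by
    have hclosed : IsClosed ((Subalgebra.toSubmodule
        (Algebra.adjoin ℂ ({M} : Set (Matrix (Fin n) (Fin n) ℂ)))) : Set (Matrix (Fin n) (Fin n) ℂ)) :=
      Submodule.closed_of_finiteDimensional _
    have := (expSeries_summable' (𝕂 := ℂ) M).hasSum.tendsto_sum_nat
    rw [exp_eq_tsum ℂ]
    refine hclosed.mem_of_tendsto this (Filter.Eventually.of_forall fun k => ?_)
    refine Submodule.sum_mem _ fun i _ => Submodule.smul_mem _ _ ?_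
    exact Subalgebra.pow_mem _ (Algebra.self_mem_adjoin_singleton ℂ M) i
  rw [Algebra.adjoin_singleton_eq_range_aeval] at hmem
  obtain ⟨p, hp⟩ := hmem
  exact ⟨p, hp.symm⟩

theorem spectrum_exp_subset [NeZero n] (M : Matrix (Fin n) (Fin n) ℂ) :
    ∀ μ ∈ spectrum ℂ (exp M), ∃ z ∈ spectrum ℂ M, μ = Complex.exp z := by
  obtain ⟨p, hp⟩ := exp_eq_aeval M
  intro μ hμ
  rw [hp, spectrum.map_polynomial_aeval_of_nonempty M p (spectrum.nonempty M)] at hμ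
  obtain ⟨z, hz, hev⟩ := hμ
  refine ⟨z, hz, ?_⟩
  -- eigenvector for z
  have hz' := hz
  rw [spectrum.mem_iff] at hz'
  have halg : algebraMap ℂ (Matrix (Fin n) (Fin n) ℂ) z - M
      = z • (1 : Matrix (Fin n) (Fin n) ℂ) - M := by
    rw [Algebra.algebraMap_eq_smul_one]
  have hdet : (z • (1 : Matrix (Fin n) (Fin n) ℂ) - M).det = 0 := by
    by_contra hd
    exact hz' (halg ▸ (Matrix.isUnit_iff_isUnit_det _).mpr (Ne.isUnit hd))
  obtain ⟨v, hv0, hv⟩ := (Matrix.exists_mulVec_eq_zero_iff).mpr hdet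
  have heig : M *ᵥ v = z • v := by
    have h2 : M *ᵥ v = (z • (1 : Matrix (Fin n) (Fin n) ℂ)) *ᵥ v :=
      (sub_eq_zero.mp (by rwa [Matrix.sub_mulVec] at hv)).symm
    rw [h2, Matrix.smul_mulVec, Matrix.one_mulVec]
  -- aeval eigen
  have haev : (aeval M p) *ᵥ v = p.eval z • v := by
    rw [aeval_eq_sum_range, eval_eq_sum_range]
    have : (∑ i ∈ Finset.range (p.natDegree + 1), p.coeff i • M ^ i) *ᵥ v
        = ∑ i ∈ Finset.range (p.natDegree + 1), p.coeff i • (M ^ i *ᵥ v) := by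
      show mulVecCLM v _ = _
      rw [map_sum]
      exact Finset.sum_congr rfl fun i _ => by
        show (p.coeff i • M ^ i) *ᵥ v = _
        rw [Matrix.smul_mulVec]
    rw [this]
    rw [Finset.sum_smul]
    exact Finset.sum_congr rfl fun i _ => by
      rw [pow_mulVec_eigen M z v heig i, smul_smul]
  have hexp : exp M *ᵥ v = Complex.exp z • v := exp_mulVec_eigen M z v heig
  rw [hp, haev] at hexp
  obtain ⟨i, hi⟩ := Function.ne_iff.mp hv0
  have := congrFun hexp i
  simp only [Pi.smul_apply, smul_eq_mul] at this
  simp only at hev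
  have hi' : v i ≠ 0 := hi
  rw [← hev, mul_right_cancel₀ hi' this]

theorem linfty_entry_le {α : Type*} [NormedRing α] (M : Matrix (Fin n) (Fin n) α) (i j : Fin n) :
    ‖M i j‖ ≤ ‖M‖ := by
  have h1 : ‖M i j‖₊ ≤ ‖M‖₊ := by
    rw [Matrix.linfty_opNNNorm_def]
    exact le_trans (Finset.single_le_sum (f := fun j' => ‖M i j'‖₊)
      (fun _ _ => zero_le) (Finset.mem_univ j))
      (Finset.le_sup (f := fun i => ∑ j, ‖M i j‖₊) (Finset.mem_univ i))
  exact h1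

noncomputable def cplx (A : Matrix (Fin n) (Fin n) ℝ) : Matrix (Fin n) (Fin n) ℂ :=
  A.map fun x : ℝ => (x : ℂ)

theorem cplx_exp (A : Matrix (Fin n) (Fin n) ℝ) (t : ℝ) :
    cplx (exp (t • A)) = exp (t • cplx A) := by
  have hcont : Continuous ((Complex.ofRealHom.mapMatrix :
      Matrix (Fin n) (Fin n) ℝ →+* Matrix (Fin n) (Fin n) ℂ)) := by
    show Continuous fun M : Matrix (Fin n) (Fin n) ℝ => M.map fun x : ℝ => (x : ℂ)
    exact Continuous.matrix_map continuous_id Complex.continuous_ofReal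
  have h1 : cplx (exp (t • A)) = exp ((Complex.ofRealHom.mapMatrix) (t • A)) :=
    map_exp Complex.ofRealHom.mapMatrix hcont (t • A)
  rw [h1]
  congr 1
  ext i j
  simp [cplx]

theorem exp_bounded (A : Matrix (Fin n) (Fin n) ℝ)
    (hA : ∀ z ∈ spectrum ℂ (cplx A), z.re < 0) :
    ∃ C : ℝ, 0 < C ∧ ∀ t : ℝ, 0 ≤ t → ∀ i j, |exp (t • A) i j| ≤ C := by
  rcases Nat.eq_zero_or_pos n with hn | hn
  · subst hn; exact ⟨1, one_pos, fun t ht i => i.elim0⟩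
  haveI : NeZero n := ⟨by omega⟩
  haveI : Nonempty (Fin n) := ⟨⟨0, hn⟩⟩
  set M := cplx A with hM
  set E := exp M with hE
  have hρ : spectralRadius ℂ E < 1 := by
    refine spectrum.spectralRadius_lt_of_forall_lt_of_nonempty (spectrum.nonempty E) ?_
    intro μ hμ
    obtain ⟨z, hz, rfl⟩ := spectrum_exp_subset M μ hμ
    show ‖Complex.exp z‖₊ < 1
    rw [← NNReal.coe_lt_coe]
    simpa [Complex.norm_exp] using Real.exp_lt_one_iff.mpr (hA z hz)
  have hg := spectrum.pow_nnnorm_pow_one_div_tendsto_nhds_spectralRadius E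
  have hev : ∀ᶠ k : ℕ in atTop, (‖E ^ k‖₊ : ENNReal) ^ (1 / (k : ℝ)) < 1 :=
    hg.eventually_lt_const hρ
  obtain ⟨k, hklt, hk1⟩ := (hev.and (eventually_ge_atTop 1)).exists
  -- ‖E^k‖ < 1 hence ≤ 1
  have hEk : ‖E ^ k‖ ≤ 1 := by
    by_contra hgt
    push_neg at hgt
    have h1 : (1 : ENNReal) ≤ (‖E ^ k‖₊ : ENNReal) := by
      rw [← ENNReal.coe_one, ENNReal.coe_le_coe, ← NNReal.coe_le_coe]
      exact le_of_lt hgt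
    have h2 : (1 : ENNReal) ≤ (‖E ^ k‖₊ : ENNReal) ^ (1 / (k : ℝ)) := by
      calc (1 : ENNReal) = 1 ^ (1 / (k : ℝ)) := (ENNReal.one_rpow _).symm
      _ ≤ _ := ENNReal.rpow_le_rpow h1 (by positivity)
    exact absurd hklt (not_lt.mpr h2)
  -- sup over [0, k]
  have hcont : Continuous fun s : ℝ => exp (s • M) :=
    exp_continuous.comp (by fun_prop)
  obtain ⟨C₀, hC₀⟩ := (isCompact_Icc (a := (0:ℝ)) (b := (k:ℝ))).exists_bound_of_continuousOn
    hcont.continuousOn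
  refine ⟨max C₀ 1, lt_of_lt_of_le one_pos (le_max_right _ _), fun t ht i j => ?_⟩
  -- |exp (t•A) i j| = ‖exp (t • M) i j‖
  have hentry : |exp (t • A) i j| = ‖exp (t • M) i j‖ := by
    rw [← cplx_exp]
    simp [cplx, Complex.norm_real]
  rw [hentry]
  refine le_trans (linfty_entry_le _ i j) ?_
  -- decompose t = s + k * q
  set q : ℕ := ⌊t / (k : ℝ)⌋₊ with hq
  set s : ℝ := t - (k * q : ℕ) with hs
  have hks : (0:ℝ) < (k:ℝ) := by exact_mod_cast hk1
  have h1 : (q : ℝ) * k ≤ t := by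
    have := Nat.floor_le (show (0:ℝ) ≤ t / k by positivity)
    calc (q : ℝ) * k ≤ t / k * k := by
          apply mul_le_mul_of_nonneg_right _ hks.le
          exact this
    _ = t := by field_simp
  have h2 : t < ((q : ℝ) + 1) * k := by
    have := Nat.lt_floor_add_one (t / (k:ℝ))
    calc t = t / k * k := by field_simp
    _ < ((q:ℝ) + 1) * k := by
        apply mul_lt_mul_of_pos_right _ hks
        exact this
  have hsmem : s ∈ Set.Icc (0:ℝ) (k:ℝ) := by
    constructor
    · rw [hs]; push_cast; nlinarith
    · rw [hs]; push_cast; nlinarith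
  have hsplit : exp (t • M) = exp (s • M) * (E ^ k) ^ q := by
    have h1 : t • M = s • M + ((k * q : ℕ) : ℝ) • M := by
      rw [← add_smul]; congr 1; rw [hs]; ring
    have e1 : exp (s • M + ((k * q : ℕ) : ℝ) • M)
        = exp (s • M) * exp (((k * q : ℕ) : ℝ) • M) :=
      Matrix.exp_add_of_commute _ _ (((Commute.refl M).smul_left _).smul_right _)
    have e2 : exp (((k * q : ℕ) : ℝ) • M) = (E ^ k) ^ q := by
      rw [Nat.cast_smul_eq_nsmul ℝ]
      exact (Matrix.exp_nsmul (k * q) M).trans (pow_mul E k q)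
    rw [h1]
    exact e1.trans (by rw [e2])
  rw [hsplit]
  calc ‖exp (s • M) * (E ^ k) ^ q‖ ≤ ‖exp (s • M)‖ * ‖(E ^ k) ^ q‖ := norm_mul_le _ _
  _ ≤ C₀ * 1 := by
      refine mul_le_mul (hC₀ _ hsmem) ?_ (norm_nonneg _)
        ((norm_nonneg _).trans (hC₀ 0 ⟨le_refl 0, by positivity⟩))
      calc ‖(E ^ k) ^ q‖ ≤ ‖E ^ k‖ ^ q := norm_pow_le _ _
      _ ≤ 1 := pow_le_one₀ (norm_nonneg _) hEk
  _ ≤ max C₀ 1 := by simp [mul_one, le_max_left]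


theorem exp_smul_one (c : ℝ) :
    exp (c • (1 : Matrix (Fin n) (Fin n) ℝ)) = Real.exp c • (1 : Matrix (Fin n) (Fin n) ℝ) := by
  have hcont : Continuous (algebraMap ℝ (Matrix (Fin n) (Fin n) ℝ)) := by
    show Continuous fun c : ℝ => algebraMap ℝ (Matrix (Fin n) (Fin n) ℝ) c
    simp_rw [Algebra.algebraMap_eq_smul_one]
    exact continuous_id.smul continuous_const
  have h1 : c • (1 : Matrix (Fin n) (Fin n) ℝ) = algebraMap ℝ _ c :=
    (Algebra.algebraMap_eq_smul_one c).symm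
  erw [h1, ← map_exp (algebraMap ℝ (Matrix (Fin n) (Fin n) ℝ)) hcont c,
    Algebra.algebraMap_eq_smul_one, Real.exp_eq_exp_ℝ]

theorem exp_decay (A : Matrix (Fin n) (Fin n) ℝ)
    (hA : ∀ z ∈ spectrum ℂ (A.map fun x : ℝ => (x : ℂ)), z.re < 0) :
    ∃ C ε : ℝ, 0 < C ∧ 0 < ε ∧ ∀ t : ℝ, 0 ≤ t → ∀ i j,
      |exp (t • A) i j| ≤ C * Real.exp (-ε * t) := by
  have hA' : ∀ z ∈ spectrum ℂ (cplx A), z.re < 0 := hA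
  rcases Nat.eq_zero_or_pos n with hn | hn
  · subst hn; exact ⟨1, 1, one_pos, one_pos, fun t ht i => i.elim0⟩
  haveI : NeZero n := ⟨by omega⟩
  haveI : Nonempty (Fin n) := ⟨⟨0, hn⟩⟩
  obtain ⟨z₀, hz₀, hmax⟩ := (Matrix.finite_spectrum (cplx A)).toFinset.exists_max_image
    Complex.re (by simpa using spectrum.nonempty (cplx A))
  simp only [Set.Finite.mem_toFinset] at hz₀
  set ε : ℝ := -z₀.re / 2 with hε
  have hεpos : 0 < ε := by
    have := hA' z₀ hz₀
    rw [hε]; linarith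
  set A' : Matrix (Fin n) (Fin n) ℝ := A + ε • 1 with hA'def
  have hspec : ∀ w ∈ spectrum ℂ (cplx A'), w.re < 0 := by
    intro w hw
    have hc : cplx A' = algebraMap ℂ (Matrix (Fin n) (Fin n) ℂ) (ε : ℂ) + cplx A := by
      rw [Algebra.algebraMap_eq_smul_one]
      ext i j
      by_cases h : i = j <;> simp [cplx, hA'def, Matrix.one_apply, h, add_comm]
    rw [hc, ← spectrum.singleton_add_eq] at hw
    obtain ⟨u, hu, z, hz, rfl⟩ := Set.mem_add.mp hw
    rw [Set.mem_singleton_iff] at hu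
    subst hu
    have h1 : z.re ≤ z₀.re := hmax z (Set.Finite.mem_toFinset _ |>.mpr hz)
    have : ((ε : ℂ) + z).re = ε + z.re := by simp
    rw [this, hε]
    linarith
  obtain ⟨C, hC, hbound⟩ := exp_bounded A' hspec
  refine ⟨C, ε, hC, hεpos, fun t ht i j => ?_⟩
  have hkey : exp (t • A') = Real.exp (t * ε) • exp (t • A) := by
    have h1 : t • A' = t • A + (t * ε) • (1 : Matrix (Fin n) (Fin n) ℝ) := by
      rw [hA'def, smul_add, smul_smul]
    have h2 : exp (t • A + (t * ε) • (1 : Matrix (Fin n) (Fin n) ℝ))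
        = exp (t • A) * exp ((t * ε) • (1 : Matrix (Fin n) (Fin n) ℝ)) :=
      Matrix.exp_add_of_commute _ _
        (((Commute.one_right A).smul_left t).smul_right (t * ε))
    rw [h1, h2, exp_smul_one, mul_smul_comm, mul_one]
  have hentry : exp (t • A) i j = Real.exp (-(t * ε)) * exp (t • A') i j := by
    rw [hkey, Matrix.smul_apply, smul_eq_mul, ← mul_assoc, ← Real.exp_add]
    simp
  rw [hentry, abs_mul, abs_of_pos (Real.exp_pos _)]
  calc Real.exp (-(t * ε)) * |exp (t • A') i j|
      ≤ Real.exp (-(t * ε)) * C := by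
        exact mul_le_mul_of_nonneg_left (hbound t ht i j) (Real.exp_pos _).le
  _ = C * Real.exp (-ε * t) := by rw [mul_comm]; congr 1; ring_nf

theorem entry_hasDerivAt_left (A : Matrix (Fin n) (Fin n) ℝ) (t : ℝ) (i j : Fin n) :
    HasDerivAt (fun τ : ℝ => exp (τ • A) i j) ((A * exp (t • A)) i j) t := by
  have hclm : Matrix (Fin n) (Fin n) ℝ →L[ℝ] ℝ :=
    LinearMap.toContinuousLinearMap
      ((LinearMap.proj j).comp ((LinearMap.proj i).comp
        (LinearMap.id (R := ℝ) (M := Matrix (Fin n) (Fin n) ℝ))))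
  exact (LinearMap.toContinuousLinearMap
      ((LinearMap.proj j).comp ((LinearMap.proj i).comp
        (LinearMap.id (R := ℝ) (M := Matrix (Fin n) (Fin n) ℝ))))).hasFDerivAt.comp_hasDerivAt
    t (hasDerivAt_exp_smul_const' A t)

theorem entry_hasDerivAt_right (A : Matrix (Fin n) (Fin n) ℝ) (t : ℝ) (i j : Fin n) :
    HasDerivAt (fun τ : ℝ => exp (τ • A) i j) ((exp (t • A) * A) i j) t :=
  (LinearMap.toContinuousLinearMap
      ((LinearMap.proj j).comp ((LinearMap.proj i).comp
        (LinearMap.id (R := ℝ) (M := Matrix (Fin n) (Fin n) ℝ))))).hasFDerivAt.comp_hasDerivAt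
    t (hasDerivAt_exp_smul_const A t)

end Linfty


section Main
attribute [local instance] Matrix.normedAddCommGroup Matrix.normedSpace

variable {n m : ℕ}

theorem hasDerivAt_exp_l (A : Matrix (Fin n) (Fin n) ℝ) (t : ℝ) :
    HasDerivAt (fun τ : ℝ => exp (τ • A)) (A * exp (t • A)) t := by
  refine hasDerivAt_pi.mpr ?_
  intro i
  refine hasDerivAt_pi.mpr ?_
  intro j
  exact entry_hasDerivAt_left A t i j

theorem hasDerivAt_exp_r (A : Matrix (Fin n) (Fin n) ℝ) (t : ℝ) :
    HasDerivAt (fun τ : ℝ => exp (τ • A)) (exp (t • A) * A) t := by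
  refine hasDerivAt_pi.mpr ?_
  intro i
  refine hasDerivAt_pi.mpr ?_
  intro j
  exact entry_hasDerivAt_right A t i j

/-- Matrix multiplication as a continuous bilinear map. -/
noncomputable def mulCLM : Matrix (Fin n) (Fin n) ℝ →L[ℝ]
    Matrix (Fin n) (Fin n) ℝ →L[ℝ] Matrix (Fin n) (Fin n) ℝ :=
  LinearMap.toContinuousLinearMap
    { toFun := fun X => LinearMap.toContinuousLinearMap (LinearMap.mulLeft ℝ X)
      map_add' := fun X Y => by ext Z; simp [add_mul]
      map_smul' := fun c X => by ext Z; simp [smul_mul_assoc] }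

theorem mulCLM_apply (X Y : Matrix (Fin n) (Fin n) ℝ) : mulCLM X Y = X * Y := rfl

theorem HasDerivAt.matmul {u v : ℝ → Matrix (Fin n) (Fin n) ℝ}
    {u' v' : Matrix (Fin n) (Fin n) ℝ} {t : ℝ}
    (hu : HasDerivAt u u' t) (hv : HasDerivAt v v' t) :
    HasDerivAt (fun τ => u τ * v τ) (u t * v' + u' * v t) t := by
  have := mulCLM.hasDerivAt_of_bilinear (fun _ => hu) (fun _ => hv)
  exact this

noncomputable def mulLCLM (P : Matrix (Fin n) (Fin n) ℝ) :
    Matrix (Fin n) (Fin n) ℝ →L[ℝ] Matrix (Fin n) (Fin n) ℝ :=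
  LinearMap.toContinuousLinearMap (LinearMap.mulLeft ℝ P)

noncomputable def mulRCLM (P : Matrix (Fin n) (Fin n) ℝ) :
    Matrix (Fin n) (Fin n) ℝ →L[ℝ] Matrix (Fin n) (Fin n) ℝ :=
  LinearMap.toContinuousLinearMap (LinearMap.mulRight ℝ P)

noncomputable def transCLM :
    Matrix (Fin n) (Fin n) ℝ →L[ℝ] Matrix (Fin n) (Fin n) ℝ :=
  LinearMap.toContinuousLinearMap
    { toFun := fun X => Xᵀ
      map_add' := fun X Y => Matrix.transpose_add X Y
      map_smul' := fun c X => Matrix.transpose_smul c X }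

noncomputable def quadCLM (x : Fin n → ℝ) :
    Matrix (Fin n) (Fin n) ℝ →L[ℝ] ℝ :=
  LinearMap.toContinuousLinearMap
    { toFun := fun M => x ⬝ᵥ (M *ᵥ x)
      map_add' := fun M N => by
        show x ⬝ᵥ ((M + N) *ᵥ x) = x ⬝ᵥ (M *ᵥ x) + x ⬝ᵥ (N *ᵥ x)
        rw [Matrix.add_mulVec, dotProduct_add]
      map_smul' := fun c M => by
        show x ⬝ᵥ ((c • M) *ᵥ x) = c • (x ⬝ᵥ (M *ᵥ x))
        rw [Matrix.smul_mulVec, dotProduct_smul] }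

theorem exp_transpose' (A : Matrix (Fin n) (Fin n) ℝ) (t : ℝ) :
    exp (t • Aᵀ) = (exp (t • A))ᵀ := by
  have h1 : t • Aᵀ = (t • A)ᵀ := (Matrix.transpose_smul t A).symm
  rw [h1]
  exact Matrix.exp_transpose (t • A)

theorem norm3_bound {A : Matrix (Fin n) (Fin n) ℝ} {C ε : ℝ} (hC : 0 < C)
    (hdec : ∀ t : ℝ, 0 ≤ t → ∀ i j, |exp (t • A) i j| ≤ C * Real.exp (-ε * t))
    (X : Matrix (Fin n) (Fin n) ℝ) (t : ℝ) (ht : 0 ≤ t) :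
    ‖exp (t • A) * X * exp (t • Aᵀ)‖
      ≤ ((n : ℝ) * n * C * C * ‖X‖) * Real.exp (-(2 * ε) * t) := by
  rw [Matrix.norm_le_iff (by positivity)]
  intro i j
  have hq : ∀ a b : Fin n, |exp (t • Aᵀ) a b| ≤ C * Real.exp (-ε * t) := by
    intro a b
    rw [exp_transpose']
    exact hdec t ht b a
  have hentry : (exp (t • A) * X * exp (t • Aᵀ)) i j
      = ∑ b, ∑ a, exp (t • A) i a * X a b * exp (t • Aᵀ) b j := by
    rw [Matrix.mul_apply]
    refine Finset.sum_congr rfl fun b _ => ?_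
    rw [Matrix.mul_apply, Finset.sum_mul]
  rw [hentry]
  have hexp2 : Real.exp (-(2 * ε) * t) = Real.exp (-ε * t) * Real.exp (-ε * t) := by
    rw [← Real.exp_add]; ring_nf
  calc |∑ b, ∑ a, exp (t • A) i a * X a b * exp (t • Aᵀ) b j|
      ≤ ∑ b, ∑ a, |exp (t • A) i a * X a b * exp (t • Aᵀ) b j| := by
        refine (Finset.abs_sum_le_sum_abs _ _).trans (Finset.sum_le_sum fun b _ => ?_)
        exact Finset.abs_sum_le_sum_abs _ _
  _ ≤ ∑ _b : Fin n, ∑ _a : Fin n, (C * Real.exp (-ε * t)) * ‖X‖ * (C * Real.exp (-ε * t)) := by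
        refine Finset.sum_le_sum fun b _ => Finset.sum_le_sum fun a _ => ?_
        rw [abs_mul, abs_mul]
        have h1 := hdec t ht i a
        have h2 : |X a b| ≤ ‖X‖ := Matrix.norm_entry_le_entrywise_sup_norm X
        have h3 := hq b j
        have he : (0:ℝ) < Real.exp (-ε * t) := Real.exp_pos _
        refine mul_le_mul (mul_le_mul h1 h2 (abs_nonneg _) (by positivity)) h3
          (abs_nonneg _) (by positivity)
  _ = ((n : ℝ) * n * C * C * ‖X‖) * Real.exp (-(2 * ε) * t) := by
        rw [Finset.sum_const, Finset.sum_const, Finset.card_univ, Fintype.card_fin,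
          hexp2, nsmul_eq_mul, nsmul_eq_mul]
        ring


end Main

open MeasureTheory intervalIntegral

attribute [local instance] Matrix.normedAddCommGroup Matrix.normedSpace

/-- If `A` is Hurwitz, then for any `B` the Lyapunov equation
`A W + W Aᵀ + B Bᵀ = 0` has the symmetric positive semidefinite matrix
`W = ∫₀^∞ e^{Aτ} B Bᵀ e^{Aᵀτ} dτ` as its unique solution. -/
theorem lyapunov_unique_posSemidef_solution {n m : ℕ}
    (A : Matrix (Fin n) (Fin n) ℝ)
    (hA : ∀ z ∈ spectrum ℂ (A.map fun x : ℝ => (x : ℂ)), z.re < 0)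
    (B : Matrix (Fin n) (Fin m) ℝ) :
    let G : Matrix (Fin n) (Fin n) ℝ :=
      ∫ τ in Set.Ioi (0 : ℝ),
        NormedSpace.exp (τ • A) * (B * Bᵀ) * NormedSpace.exp (τ • Aᵀ)
    A * G + G * Aᵀ + B * Bᵀ = 0 ∧ G.PosSemidef ∧
      ∀ W : Matrix (Fin n) (Fin n) ℝ, A * W + W * Aᵀ + B * Bᵀ = 0 → W = G := by
  intro G
  letI : ContinuousENorm (Matrix (Fin n) (Fin n) ℝ) := by exact SeminormedAddGroup.toContinuousENorm
  letI : ENormedAddMonoid (Matrix (Fin n) (Fin n) ℝ) := by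
    exact NormedAddCommGroup.toENormedAddCommMonoid.toENormedAddMonoid
  letI : TopologicalSpace.PseudoMetrizableSpace (Matrix (Fin n) (Fin n) ℝ) := by
    exact PseudoEMetricSpace.pseudoMetrizableSpace
  obtain ⟨C, ε, hC, hε, hdec⟩ := exp_decay A hA
  set K : Matrix (Fin n) (Fin n) ℝ := B * Bᵀ with hK
  set g : ℝ → Matrix (Fin n) (Fin n) ℝ :=
    fun τ => exp (τ • A) * K * exp (τ • Aᵀ) with hg
  have hGdef : G = ∫ τ in Set.Ioi (0:ℝ), g τ := rfl
  have hKsymm : Kᵀ = K := by rw [hK, Matrix.transpose_mul, Matrix.transpose_transpose]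
  -- derivative of g
  have hgd : ∀ t : ℝ, HasDerivAt g (A * g t + g t * Aᵀ) t := by
    intro t
    have h1 : HasDerivAt (fun τ : ℝ => exp (τ • A) * K) (A * exp (t • A) * K) t := by
      simpa using (hasDerivAt_exp_l A t).matmul (hasDerivAt_const t K)
    have h3 := h1.matmul (hasDerivAt_exp_r Aᵀ t)
    have heq : exp (t • A) * K * (exp (t • Aᵀ) * Aᵀ)
        + A * exp (t • A) * K * exp (t • Aᵀ) = A * g t + g t * Aᵀ := by
      rw [hg]
      simp only [mul_assoc]
      rw [add_comm]
    rw [heq] at h3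
    exact h3
  have hgc : Continuous g := continuous_iff_continuousAt.mpr fun t => (hgd t).continuousAt
  have hgnorm : ∀ t : ℝ, 0 ≤ t →
      ‖g t‖ ≤ ((n : ℝ) * n * C * C * ‖K‖) * Real.exp (-(2 * ε) * t) := fun t ht =>
    norm3_bound hC hdec K t ht
  -- integrability
  have hInt : IntegrableOn g (Set.Ioi (0:ℝ)) := by
    refine Integrable.mono'
      ((exp_neg_integrableOn_Ioi 0 (by positivity : (0:ℝ) < 2 * ε)).const_mul
        ((n : ℝ) * n * C * C * ‖K‖)) hgc.aestronglyMeasurable ?_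
    refine (ae_restrict_iff' measurableSet_Ioi).mpr (Filter.Eventually.of_forall fun t ht => ?_)
    exact hgnorm t (le_of_lt ht)
  -- continuity of the derivative
  have hcl : Continuous fun τ => A * g τ := (mulLCLM A).continuous.comp hgc
  have hcr : Continuous fun τ => g τ * Aᵀ := (mulRCLM Aᵀ).continuous.comp hgc
  have hderivCont : Continuous fun τ => A * g τ + g τ * Aᵀ := hcl.add hcr
  -- FTC
  have hg0 : g 0 = K := by
    rw [hg]
    show exp ((0:ℝ) • A) * K * exp ((0:ℝ) • Aᵀ) = K
    rw [zero_smul, zero_smul, exp_zero, one_mul, mul_one]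
  set Φ : ℝ → Matrix (Fin n) (Fin n) ℝ := fun T => ∫ τ in (0:ℝ)..T, g τ with hΦdef
  have hkey : ∀ T : ℝ, A * Φ T + Φ T * Aᵀ = g T - K := by
    intro T
    have hIι : IntervalIntegrable g volume 0 T := hgc.intervalIntegrable _ _
    have hFTC : (∫ τ in (0:ℝ)..T, (A * g τ + g τ * Aᵀ)) = g T - g 0 :=
      integral_eq_sub_of_hasDerivAt (fun τ _ => hgd τ) (hderivCont.intervalIntegrable _ _)
    have e1 : (∫ τ in (0:ℝ)..T, A * g τ) = A * Φ T :=
      (mulLCLM A).intervalIntegral_comp_comm hIι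
    have e2 : (∫ τ in (0:ℝ)..T, g τ * Aᵀ) = Φ T * Aᵀ :=
      (mulRCLM Aᵀ).intervalIntegral_comp_comm hIι
    rw [← e1, ← e2, ← integral_add (hcl.intervalIntegrable _ _) (hcr.intervalIntegrable _ _),
      hFTC, hg0]
  -- limits
  have hΦlim : Filter.Tendsto Φ Filter.atTop (𝓝 G) := by
    rw [hGdef]
    exact intervalIntegral_tendsto_integral_Ioi 0 hInt Filter.tendsto_id
  have hg0lim : Filter.Tendsto g Filter.atTop (𝓝 0) := by
    refine squeeze_zero_norm' (a := fun T => ((n:ℝ) * n * C * C * ‖K‖) * Real.exp (-(2*ε) * T))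
      ?_ ?_
    · filter_upwards [Filter.eventually_ge_atTop (0:ℝ)] with t ht
      exact hgnorm t ht
    · have h1 : Filter.Tendsto (fun T : ℝ => (2 * ε) * T) Filter.atTop Filter.atTop :=
        Filter.Tendsto.const_mul_atTop (by positivity) Filter.tendsto_id
      have h2 : Filter.Tendsto (fun T : ℝ => Real.exp (-(2 * ε) * T)) Filter.atTop (𝓝 0) := by
        have := Real.tendsto_exp_neg_atTop_nhds_zero.comp h1
        simpa [Function.comp_def, neg_mul] using this
      simpa using h2.const_mul ((n:ℝ) * n * C * C * ‖K‖)
  have heqlim : A * G + G * Aᵀ = -K := by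
    have t1 : Filter.Tendsto (fun T => A * Φ T + Φ T * Aᵀ) Filter.atTop
        (𝓝 (A * G + G * Aᵀ)) := by
      have l1 : Filter.Tendsto (fun T => A * Φ T) Filter.atTop (𝓝 (A * G)) :=
        ((mulLCLM A).continuous.tendsto G).comp hΦlim
      have l2 : Filter.Tendsto (fun T => Φ T * Aᵀ) Filter.atTop (𝓝 (G * Aᵀ)) :=
        ((mulRCLM Aᵀ).continuous.tendsto G).comp hΦlim
      exact l1.add l2
    have t2 : Filter.Tendsto (fun T => g T - K) Filter.atTop (𝓝 (0 - K)) :=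
      hg0lim.sub tendsto_const_nhds
    have h := tendsto_nhds_unique t1 ((Filter.tendsto_congr hkey).mpr t2)
    rw [zero_sub] at h
    exact h
  refine ⟨?_, Matrix.PosSemidef.of_dotProduct_mulVec_nonneg ?_ ?_, ?_⟩
  · -- the equation
    rw [heqlim]
    exact neg_add_cancel K
  · -- Hermitian
    have hsymm : ∀ τ : ℝ, (g τ)ᵀ = g τ := by
      intro τ
      show (exp (τ • A) * K * exp (τ • Aᵀ))ᵀ = exp (τ • A) * K * exp (τ • Aᵀ)
      rw [exp_transpose' A τ, Matrix.transpose_mul, Matrix.transpose_mul,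
        Matrix.transpose_transpose, hKsymm, mul_assoc]
    calc Gᴴ = Gᵀ := Matrix.conjTranspose_eq_transpose_of_trivial G
    _ = transCLM (∫ τ in Set.Ioi (0:ℝ), g τ) := by rw [hGdef]; rfl
    _ = ∫ τ in Set.Ioi (0:ℝ), (g τ)ᵀ := (transCLM.integral_comp_comm hInt).symm
    _ = ∫ τ in Set.Ioi (0:ℝ), g τ := by
        congr 1
        funext τ
        exact hsymm τ
    _ = G := hGdef.symm
  · -- quadratic form nonneg
    intro x
    have hstar : star x = x := funext fun i => star_trivial (x i)
    rw [hstar]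
    have hnn : ∀ τ : ℝ, 0 ≤ x ⬝ᵥ (g τ *ᵥ x) := by
      intro τ
      have hfact : g τ = (exp (τ • A) * B) * (exp (τ • A) * B)ᵀ := by
        show exp (τ • A) * K * exp (τ • Aᵀ) = _
        rw [exp_transpose' A τ, hK, Matrix.transpose_mul]
        rw [Matrix.mul_assoc, Matrix.mul_assoc, Matrix.mul_assoc]
      have hps := Matrix.posSemidef_self_mul_conjTranspose (exp (τ • A) * B)
      have := hps.dotProduct_mulVec_nonneg x
      rw [Matrix.conjTranspose_eq_transpose_of_trivial] at this
      rw [hfact]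
      simpa [hstar] using this
    calc (0:ℝ) ≤ ∫ τ in Set.Ioi (0:ℝ), x ⬝ᵥ (g τ *ᵥ x) :=
          setIntegral_nonneg measurableSet_Ioi fun τ _ => hnn τ
    _ = x ⬝ᵥ (G *ᵥ x) := by
        rw [hGdef]
        have h5 : (∫ τ in Set.Ioi (0:ℝ), quadCLM x (g τ)) = quadCLM x (∫ τ in Set.Ioi (0:ℝ), g τ) :=
          (quadCLM x).integral_comp_comm hInt
        exact h5
  · -- uniqueness
    intro W hW
    have hWeq : A * W + W * Aᵀ = -K := eq_neg_of_add_eq_zero_left hW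
    set h : ℝ → Matrix (Fin n) (Fin n) ℝ :=
      fun τ => exp (τ • A) * W * exp (τ • Aᵀ) with hh
    have hcommA : ∀ τ : ℝ, A * exp (τ • A) = exp (τ • A) * A := fun τ =>
      (((Commute.refl A).smul_right τ).exp_right).eq
    have hcommAT : ∀ τ : ℝ, Aᵀ * exp (τ • Aᵀ) = exp (τ • Aᵀ) * Aᵀ := fun τ =>
      (((Commute.refl Aᵀ).smul_right τ).exp_right).eq
    have hhd : ∀ t : ℝ, HasDerivAt h (-(g t)) t := by
      intro t
      have h1 : HasDerivAt (fun τ : ℝ => exp (τ • A) * W) (A * exp (t • A) * W) t := by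
        simpa using (hasDerivAt_exp_l A t).matmul (hasDerivAt_const t W)
      have h3 := h1.matmul (hasDerivAt_exp_r Aᵀ t)
      have heq2 : exp (t • A) * W * (exp (t • Aᵀ) * Aᵀ)
          + A * exp (t • A) * W * exp (t • Aᵀ) = -(g t) := by
        have e1 : A * exp (t • A) * W * exp (t • Aᵀ)
            = exp (t • A) * (A * W) * exp (t • Aᵀ) := by
          rw [hcommA t]
          simp only [mul_assoc]
        have e2 : exp (t • A) * W * (exp (t • Aᵀ) * Aᵀ)
            = exp (t • A) * (W * Aᵀ) * exp (t • Aᵀ) := by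
          rw [← hcommAT t]
          simp only [mul_assoc]
        rw [e1, e2, show g t = exp (t • A) * K * exp (t • Aᵀ) from rfl]
        rw [← add_mul, ← mul_add, add_comm (W * Aᵀ) (A * W), hWeq]
        simp only [mul_neg, neg_mul]
      rw [heq2] at h3
      exact h3
    have hh0 : h 0 = W := by
      show exp ((0:ℝ) • A) * W * exp ((0:ℝ) • Aᵀ) = W
      rw [zero_smul, zero_smul, exp_zero, one_mul, mul_one]
    have hFTC2 : ∀ T : ℝ, h T = W - Φ T := by
      intro T
      have hI : (∫ τ in (0:ℝ)..T, -(g τ)) = h T - h 0 :=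
        integral_eq_sub_of_hasDerivAt (fun τ _ => hhd τ) ((hgc.neg).intervalIntegrable _ _)
      rw [intervalIntegral.integral_neg, hh0] at hI
      have h4 : h T = -Φ T + W := sub_eq_iff_eq_add.mp hI.symm
      rw [h4]
      abel
    have hhlim : Filter.Tendsto h Filter.atTop (𝓝 0) := by
      refine squeeze_zero_norm'
        (a := fun T => ((n:ℝ) * n * C * C * ‖W‖) * Real.exp (-(2*ε) * T)) ?_ ?_
      · filter_upwards [Filter.eventually_ge_atTop (0:ℝ)] with t ht
        exact norm3_bound hC hdec W t ht
      · have h1 : Filter.Tendsto (fun T : ℝ => (2 * ε) * T) Filter.atTop Filter.atTop :=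
          Filter.Tendsto.const_mul_atTop (by positivity) Filter.tendsto_id
        have h2 : Filter.Tendsto (fun T : ℝ => Real.exp (-(2 * ε) * T)) Filter.atTop (𝓝 0) := by
          have := Real.tendsto_exp_neg_atTop_nhds_zero.comp h1
          simpa [Function.comp_def, neg_mul] using this
        simpa using h2.const_mul ((n:ℝ) * n * C * C * ‖W‖)
    have hlim2 : Filter.Tendsto (fun T => W - Φ T) Filter.atTop (𝓝 (W - G)) :=
      tendsto_const_nhds.sub hΦlim
    have : (0 : Matrix (Fin n) (Fin n) ℝ) = W - G :=
      tendsto_nhds_unique ((Filter.tendsto_congr hFTC2).mp hhlim) hlim2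
    exact (sub_eq_zero.mp this.symm)
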